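/- The second-order differential operator P₂ = x(x−1)(64x−1)(3x−2)(6x+1)∂ₓ² + (4608x⁴−6372x³+813x²+514x−4)∂ₓ + 4(576x³−801x²−108x+74) annihilates the function H(x) = 6/((1−4x)(1−64x)) · ₂F₁(1/3, 2/3; 2; 27x(2−3x)/(1−4x)³) on a neighborhood of 0 (excluding the singularities). -/

import Mathlib

open Filter Finset

/-- The Gauss hypergeometric function `₂F₁(1/3, 2/3; 2; z)` as a sum of its series. -/
noncomputable def F13232 (z : ℝ) : ℝ :=
  ∑' n : ℕ,
    ((ascPochhammer ℝ n).eval (1/3) * (ascPochhammer ℝ n).eval (2/3)) /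
      ((ascPochhammer ℝ n).eval 2 * (n.factorial : ℝ)) * z ^ n

/-- `H(x) = 6/((1−4x)(1−64x)) · ₂F₁(1/3, 2/3; 2; 27x(2−3x)/(1−4x)³)`. -/
noncomputable def H (x : ℝ) : ℝ :=
  6 / ((1 - 4*x) * (1 - 64*x)) * F13232 (27*x*(2 - 3*x) / (1 - 4*x)^3)

namespace P2aux

/-- Taylor coefficients of ₂F₁(1/3,2/3;2;·). -/
noncomputable def c (n : ℕ) : ℝ :=
  ((ascPochhammer ℝ n).eval (1/3) * (ascPochhammer ℝ n).eval (2/3)) /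
    ((ascPochhammer ℝ n).eval 2 * (n.factorial : ℝ))

lemma c_pos (n : ℕ) : 0 < c n := by
  apply div_pos
  · exact mul_pos (ascPochhammer_pos n _ (by norm_num)) (ascPochhammer_pos n _ (by norm_num))
  · exact mul_pos (ascPochhammer_pos n _ (by norm_num)) (by exact_mod_cast n.factorial_pos)

lemma c_zero : c 0 = 1 := by
  simp [c, ascPochhammer_zero]

lemma c_rec (n : ℕ) :
    c (n+1) * (((n:ℝ)+1) * ((n:ℝ)+2)) = c n * (((n:ℝ)+1/3) * ((n:ℝ)+2/3)) := by
  have h2 : (ascPochhammer ℝ n).eval 2 ≠ 0 := ne_of_gt (ascPochhammer_pos n _ (by norm_num))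
  have hf : (n.factorial : ℝ) ≠ 0 := by exact_mod_cast n.factorial_ne_zero
  have h1 : ((n:ℝ)+1) ≠ 0 := by positivity
  have h2' : ((n:ℝ)+2) ≠ 0 := by positivity
  simp only [c, ascPochhammer_succ_eval, Nat.factorial_succ, Nat.cast_mul, Nat.cast_add,
    Nat.cast_one]
  field_simp
  ring

lemma c_le_one : ∀ n, c n ≤ 1 := by
  intro n
  induction n with
  | zero => simp [c_zero]
  | succ m ih =>
    have h := c_rec m
    have hp := c_pos m
    have hp2 := c_pos (m+1)
    have h1 : c m * (((m:ℝ)+1/3) * ((m:ℝ)+2/3)) ≤ ((m:ℝ)+1/3) * ((m:ℝ)+2/3) := by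
      have hpp : (0:ℝ) ≤ ((m:ℝ)+1/3)*((m:ℝ)+2/3) := by positivity
      nlinarith [mul_nonneg (by linarith : (0:ℝ) ≤ 1 - c m) hpp]
    have hq : (0:ℝ) < ((m:ℝ)+1)*((m:ℝ)+2) := by positivity
    nlinarith [h, h1, hq]


/-- Summability of the standard bound `C (n+1)^k r^n`. -/
lemma summable_bound (C : ℝ) (k : ℕ) {r : ℝ} (h0 : 0 ≤ r) (h1 : r < 1) :
    Summable (fun n : ℕ => C * ((n:ℝ)+1)^k * r^n) := by
  have h : Summable (fun n : ℕ => (n:ℝ)^k * r^n) :=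
    summable_pow_mul_geometric_of_norm_lt_one k (by rwa [Real.norm_eq_abs, abs_of_nonneg h0])
  have h2 : Summable (fun n : ℕ => ((n:ℝ)+1)^k * r^n) := by
    rcases eq_or_lt_of_le h0 with hr | hr
    · apply summable_of_ne_finset_zero (s := {0})
      intro n hn
      simp only [Finset.mem_singleton] at hn
      rw [← hr, zero_pow hn, mul_zero]
    · have h3 : Summable (fun n : ℕ => ((n:ℝ)+1)^k * r^(n+1)) := by
        have h4 := (summable_nat_add_iff (f := fun n : ℕ => (n:ℝ)^k * r^n) 1).mpr h
        apply h4.congr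
        intro n
        push_cast
        ring
      apply (h3.mul_left r⁻¹).congr
      intro n
      rw [pow_succ]
      field_simp
  exact (h2.mul_left C).congr (fun n => by ring)

/-- Summability of power series with polynomially bounded coefficients. -/
lemma summable_coeff (a : ℕ → ℝ) (C : ℝ) (k : ℕ) (hb : ∀ n, |a n| ≤ C * ((n:ℝ)+1)^k)
    {z r : ℝ} (hzr : |z| ≤ r) (hr1 : r < 1) : Summable (fun n : ℕ => a n * z^n) := by
  have h0r : 0 ≤ r := le_trans (abs_nonneg z) hzr
  apply Summable.of_norm
  apply Summable.of_nonneg_of_le (fun n => norm_nonneg _) _ (summable_bound C k h0r hr1)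
  intro n
  rw [norm_mul, norm_pow, Real.norm_eq_abs, Real.norm_eq_abs]
  have h1 : |z|^n ≤ r^n := pow_le_pow_left₀ (abs_nonneg z) hzr n
  have h2 : (0:ℝ) ≤ C * ((n:ℝ)+1)^k := le_trans (abs_nonneg _) (hb n)
  calc |a n| * |z|^n ≤ (C * ((n:ℝ)+1)^k) * r^n := by
        exact mul_le_mul (hb n) h1 (by positivity) h2
    _ = C * ((n:ℝ)+1)^k * r^n := by ring

/-- Term-by-term differentiation of power series on the unit disc. -/
lemma hasDerivAt_psum (a : ℕ → ℝ) (C : ℝ) (k : ℕ) (hb : ∀ n, |a n| ≤ C * ((n:ℝ)+1)^k)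
    {z : ℝ} (hz : |z| < 1) :
    HasDerivAt (fun y : ℝ => ∑' n : ℕ, a n * y^n) (∑' n : ℕ, ((n:ℝ)+1) * a (n+1) * z^n) z := by
  have hC : 0 ≤ C := by
    have h := hb 0
    norm_num at h
    exact le_trans (abs_nonneg _) h
  set r : ℝ := (|z| + 1)/2 with hrdef
  have hzr : |z| < r := by rw [hrdef]; linarith
  have hr1 : r < 1 := by rw [hrdef]; linarith [hz]
  have hr0 : 0 ≤ r := le_trans (abs_nonneg z) (le_of_lt hzr)
  apply hasDerivAt_of_tendstoUniformlyOn (l := Filter.atTop) (s := Metric.ball (0:ℝ) r) Metric.isOpen_ball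
    (f := fun (N : ℕ) (y : ℝ) => ∑ n ∈ Finset.range (N+1), a n * y^n)
    (f' := fun (N : ℕ) (y : ℝ) => ∑ n ∈ Finset.range N, ((n:ℝ)+1) * a (n+1) * y^n)
    (g := fun y : ℝ => ∑' n : ℕ, a n * y^n)
    (g' := fun y : ℝ => ∑' n : ℕ, ((n:ℝ)+1) * a (n+1) * y^n)
  · -- uniform convergence of derived partial sums
    apply tendstoUniformlyOn_tsum_nat (u := fun n : ℕ => (C * 2^k) * ((n:ℝ)+1)^(k+1) * r^n)
      (summable_bound _ _ hr0 hr1)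
    intro n y hy
    have hyr : |y| ≤ r := le_of_lt (by simpa [Real.dist_eq] using hy)
    have h1 : |y|^n ≤ r^n := pow_le_pow_left₀ (abs_nonneg y) hyr n
    have hbn := hb (n+1)
    push_cast at hbn
    have step1 : |a (n+1)| * |y|^n ≤ (C * ((n:ℝ)+1+1)^k) * r^n :=
      mul_le_mul hbn h1 (by positivity) (by positivity)
    have step2 : ((n:ℝ)+1) * (|a (n+1)| * |y|^n) ≤ ((n:ℝ)+1) * ((C * ((n:ℝ)+1+1)^k) * r^n) :=
      mul_le_mul_of_nonneg_left step1 (by positivity)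
    have step3 : ((n:ℝ)+1+1)^k ≤ (2*((n:ℝ)+1))^k :=
      pow_le_pow_left₀ (by positivity) (by linarith) k
    have step4 : ((n:ℝ)+1) * ((C * ((n:ℝ)+1+1)^k) * r^n) ≤
        ((n:ℝ)+1) * ((C * (2*((n:ℝ)+1))^k) * r^n) := by
      apply mul_le_mul_of_nonneg_left _ (by positivity)
      apply mul_le_mul_of_nonneg_right _ (by positivity)
      exact mul_le_mul_of_nonneg_left step3 hC
    have heq : ((n:ℝ)+1) * ((C * (2*((n:ℝ)+1))^k) * r^n) = (C*2^k) * ((n:ℝ)+1)^(k+1) * r^n := by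
      rw [mul_pow, pow_succ]; ring
    calc ‖((n:ℝ)+1) * a (n+1) * y^n‖
        = ((n:ℝ)+1) * (|a (n+1)| * |y|^n) := by
          rw [Real.norm_eq_abs, abs_mul, abs_mul, abs_pow,
            abs_of_pos (show (0:ℝ) < (n:ℝ)+1 by positivity)]
          ring
      _ ≤ ((n:ℝ)+1) * ((C * ((n:ℝ)+1+1)^k) * r^n) := step2
      _ ≤ ((n:ℝ)+1) * ((C * (2*((n:ℝ)+1))^k) * r^n) := step4
      _ = (C*2^k) * ((n:ℝ)+1)^(k+1) * r^n := heq
  · -- partial sums have the expected derivatives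
    apply Filter.Eventually.of_forall
    intro N y hy
    have h1 : HasDerivAt (fun y : ℝ => ∑ n ∈ Finset.range (N+1), a n * y^n)
        (∑ n ∈ Finset.range (N+1), a n * ((n:ℝ) * y^(n-1))) y :=
      HasDerivAt.fun_sum fun n _ => (hasDerivAt_pow n y).const_mul (a n)
    have h2 : ∑ n ∈ Finset.range (N+1), a n * ((n:ℝ) * y^(n-1))
        = ∑ n ∈ Finset.range N, ((n:ℝ)+1) * a (n+1) * y^n := by
      rw [Finset.sum_range_succ']
      simp only [Nat.cast_zero, zero_mul, mul_zero, add_zero, Nat.add_sub_cancel]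
      apply Finset.sum_congr rfl
      intro n _
      push_cast
      ring
    rw [h2] at h1
    exact h1
  · -- pointwise convergence to the sum
    intro y hy
    have hyr : |y| ≤ r := le_of_lt (by simpa [Real.dist_eq] using hy)
    have hs : Summable (fun n : ℕ => a n * y^n) := summable_coeff a C k hb hyr hr1
    exact hs.hasSum.tendsto_sum_nat.comp (tendsto_add_atTop_nat 1)
  · simpa [Real.dist_eq] using hzr


lemma F13232_eq (z : ℝ) : F13232 z = ∑' n : ℕ, c n * z^n := rfl

/-- derivative series of F13232 -/
noncomputable def F1 (z : ℝ) : ℝ := ∑' n : ℕ, ((n:ℝ)+1) * c (n+1) * z^n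

/-- second derivative series of F13232 -/
noncomputable def F2 (z : ℝ) : ℝ := ∑' n : ℕ, ((n:ℝ)+1) * ((n:ℝ)+2) * c (n+2) * z^n

lemma cb0 : ∀ n : ℕ, |c n| ≤ 1 * ((n:ℝ)+1)^0 := by
  intro n
  rw [abs_of_pos (c_pos n)]
  simpa using c_le_one n

lemma cb1 : ∀ n : ℕ, |((n:ℝ)+1) * c (n+1)| ≤ 1 * ((n:ℝ)+1)^1 := by
  intro n
  rw [abs_mul, abs_of_pos (c_pos (n+1)), abs_of_pos (show (0:ℝ) < (n:ℝ)+1 by positivity)]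
  have := c_le_one (n+1)
  have h1 : (0:ℝ) < (n:ℝ)+1 := by positivity
  nlinarith

lemma cb2 : ∀ n : ℕ, |(((n:ℝ)+1) * ((n:ℝ)+2)) * c (n+2)| ≤ 2 * ((n:ℝ)+1)^2 := by
  intro n
  rw [abs_mul, abs_of_pos (c_pos (n+2)),
    abs_of_pos (show (0:ℝ) < ((n:ℝ)+1) * ((n:ℝ)+2) by positivity)]
  have := c_le_one (n+2)
  have hc := c_pos (n+2)
  nlinarith [sq_nonneg ((n:ℝ)+1)]

lemma cb2' : ∀ n : ℕ, |((n:ℝ)+1) * ((n:ℝ)+2) * c (n+2)| ≤ 2 * ((n:ℝ)+1)^2 := by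
  simpa [mul_assoc] using cb2

lemma hasSum_F0 {z : ℝ} (hz : |z| < 1) : HasSum (fun n : ℕ => c n * z^n) (F13232 z) := by
  rw [F13232_eq]
  exact (summable_coeff c 1 0 cb0 (le_refl |z|) hz).hasSum

lemma hasSum_F1 {z : ℝ} (hz : |z| < 1) :
    HasSum (fun n : ℕ => ((n:ℝ)+1) * c (n+1) * z^n) (F1 z) :=
  (summable_coeff _ 1 1 cb1 (le_refl |z|) hz).hasSum

lemma hasSum_F2 {z : ℝ} (hz : |z| < 1) :
    HasSum (fun n : ℕ => ((n:ℝ)+1) * ((n:ℝ)+2) * c (n+2) * z^n) (F2 z) :=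
  (summable_coeff _ 2 2 cb2' (le_refl |z|) hz).hasSum

lemma hasDerivAt_F0 {z : ℝ} (hz : |z| < 1) : HasDerivAt F13232 (F1 z) z := by
  have h := hasDerivAt_psum c 1 0 cb0 hz
  have he : F13232 = fun y : ℝ => ∑' n : ℕ, c n * y^n := by
    funext y
    exact F13232_eq y
  rw [he]
  exact h

lemma hasDerivAt_F1 {z : ℝ} (hz : |z| < 1) : HasDerivAt F1 (F2 z) z := by
  have h := hasDerivAt_psum (fun n : ℕ => ((n:ℝ)+1) * c (n+1)) 1 1 cb1 hz
  have he : (∑' n : ℕ, ((n:ℝ)+1) * ((((n+1:ℕ)):ℝ)+1) * c ((n+1)+1) * z^n) = F2 z := by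
    apply tsum_congr
    intro n
    push_cast
    ring_nf
  have he2 : F1 = fun y : ℝ => ∑' n : ℕ, ((n:ℝ)+1) * c (n+1) * y^n := rfl
  rw [he2]
  convert h using 1
  rw [← he]
  apply tsum_congr
  intro n
  push_cast
  ring

/-- The hypergeometric differential equation for the series. -/
lemma ode {z : ℝ} (hz : |z| < 1) :
    z*(1-z)*F2 z + (2-2*z)*F1 z - 2/9*F13232 z = 0 := by
  have h0 := hasSum_F0 hz
  have h1 := hasSum_F1 hz
  have h2 := hasSum_F2 hz
  have hA : HasSum (fun m : ℕ => (m:ℝ)*((m:ℝ)+1)*c (m+1)*z^m) (z * F2 z) := by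
    have h2z := h2.mul_left z
    have hsh : HasSum (fun n : ℕ => ((n+1:ℕ):ℝ)*(((n+1:ℕ):ℝ)+1)*c ((n+1)+1)*z^(n+1))
        (z * F2 z) := by
      have heq : (fun n : ℕ => ((n+1:ℕ):ℝ)*(((n+1:ℕ):ℝ)+1)*c ((n+1)+1)*z^(n+1))
          = (fun n : ℕ => z * (((n:ℝ)+1) * ((n:ℝ)+2) * c (n+2) * z^n)) := by
        funext n; push_cast; ring
      rw [heq]; exact h2z
    have h' := (hasSum_nat_add_iff (f := fun m : ℕ => (m:ℝ)*((m:ℝ)+1)*c (m+1)*z^m) 1).mp hsh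
    simpa using h'
  have hB : HasSum (fun m : ℕ => (m:ℝ)*((m:ℝ)-1)*c m*z^m) (z^2 * F2 z) := by
    have h2z := h2.mul_left (z^2)
    have hsh : HasSum (fun n : ℕ => ((n+2:ℕ):ℝ)*(((n+2:ℕ):ℝ)-1)*c (n+2)*z^(n+2))
        (z^2 * F2 z) := by
      have heq : (fun n : ℕ => ((n+2:ℕ):ℝ)*(((n+2:ℕ):ℝ)-1)*c (n+2)*z^(n+2))
          = (fun n : ℕ => z^2 * (((n:ℝ)+1) * ((n:ℝ)+2) * c (n+2) * z^n)) := by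
        funext n; push_cast; ring
      rw [heq]; exact h2z
    have h' := (hasSum_nat_add_iff (f := fun m : ℕ => (m:ℝ)*((m:ℝ)-1)*c m*z^m) 2).mp hsh
    simpa [Finset.sum_range_succ] using h'
  have hC : HasSum (fun m : ℕ => (m:ℝ)*c m*z^m) (z * F1 z) := by
    have h1z := h1.mul_left z
    have hsh : HasSum (fun n : ℕ => ((n+1:ℕ):ℝ)*c (n+1)*z^(n+1)) (z * F1 z) := by
      have heq : (fun n : ℕ => ((n+1:ℕ):ℝ)*c (n+1)*z^(n+1))
          = (fun n : ℕ => z * (((n:ℝ)+1) * c (n+1) * z^n)) := by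
        funext n; push_cast; ring
      rw [heq]; exact h1z
    have h' := (hasSum_nat_add_iff (f := fun m : ℕ => (m:ℝ)*c m*z^m) 1).mp hsh
    simpa using h'
  have hTot := ((hA.sub hB).add ((h1.mul_left 2).sub (hC.mul_left 2))).sub (h0.mul_left (2/9))
  have h00 : HasSum (fun _ : ℕ => (0:ℝ))
      ((z * F2 z - z^2 * F2 z) + (2 * F1 z - 2 * (z * F1 z)) - 2/9 * F13232 z) := by
    convert hTot using 1
    · exact rfl
    funext n
    have hr := c_rec n
    linear_combination (-(z^n)) * hr
  have hval := h00.unique hasSum_zero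
  linear_combination hval


/-! ### The algebraic substitution data -/

noncomputable def phi (x : ℝ) : ℝ := 27*x*(2 - 3*x) / (1 - 4*x)^3
noncomputable def phi1 (x : ℝ) : ℝ := (54 + 270*x - 324*x^2)/(1 - 4*x)^4
noncomputable def phi2 (x : ℝ) : ℝ := (1134 + 2592*x - 2592*x^2)/(1 - 4*x)^5
noncomputable def gg (x : ℝ) : ℝ := 6 / ((1 - 4*x) * (1 - 64*x))
noncomputable def gg1 (x : ℝ) : ℝ := (408 - 3072*x)/((1 - 4*x)*(1 - 64*x))^2
noncomputable def gg2 (x : ℝ) : ℝ := (52416 - 626688*x + 2359296*x^2)/((1 - 4*x)*(1 - 64*x))^3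

lemma fact4 {x : ℝ} (hx : |x| < 1/100) : (1:ℝ) - 4*x ≠ 0 := by
  have h := abs_lt.mp hx
  have : (0:ℝ) < 1 - 4*x := by linarith [h.1, h.2]
  exact ne_of_gt this

lemma fact64 {x : ℝ} (hx : |x| < 1/100) : (1:ℝ) - 64*x ≠ 0 := by
  have h := abs_lt.mp hx
  have : (0:ℝ) < 1 - 64*x := by linarith [h.1, h.2]
  exact ne_of_gt this

lemma phi_lt {x : ℝ} (hx : |x| < 1/100) : |phi x| < 1 := by
  have h := abs_lt.mp hx
  have hpos : (0:ℝ) < 1 - 4*x := by linarith [h.1, h.2]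
  have hd : (0:ℝ) < (1 - 4*x)^3 := by positivity
  simp only [phi]
  rw [abs_div, abs_of_pos hd, div_lt_one hd, abs_lt]
  constructor
  · nlinarith [h.1, h.2, sq_nonneg x, sq_nonneg (1 - 4*x)]
  · nlinarith [h.1, h.2, sq_nonneg x, sq_nonneg (1 - 4*x)]

lemma hasDerivAt_phi {x : ℝ} (h4 : (1:ℝ) - 4*x ≠ 0) : HasDerivAt phi (phi1 x) x := by
  have hid := hasDerivAt_id x
  have hnum := (hid.const_mul (27:ℝ)).mul ((hid.const_mul (3:ℝ)).const_sub (2:ℝ))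
  have hden := ((hid.const_mul (4:ℝ)).const_sub (1:ℝ)).pow 3
  have h := hnum.div hden (pow_ne_zero 3 h4)
  have h' : HasDerivAt phi _ x := h
  convert h' using 1
  simp only [phi1, id, Pi.mul_apply, Pi.pow_apply, Pi.add_apply, Pi.sub_apply, Pi.div_apply]
  norm_num
  field_simp
  ring

lemma hasDerivAt_phi1 {x : ℝ} (h4 : (1:ℝ) - 4*x ≠ 0) : HasDerivAt phi1 (phi2 x) x := by
  have hid := hasDerivAt_id x
  have hnum := ((hasDerivAt_const x (54:ℝ)).add (hid.const_mul (270:ℝ))).sub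
    ((hasDerivAt_pow 2 x).const_mul (324:ℝ))
  have hden := ((hid.const_mul (4:ℝ)).const_sub (1:ℝ)).pow 4
  have h := hnum.div hden (pow_ne_zero 4 h4)
  have h' : HasDerivAt phi1 _ x := h
  convert h' using 1
  simp only [phi2, id, Pi.mul_apply, Pi.pow_apply, Pi.add_apply, Pi.sub_apply, Pi.div_apply]
  norm_num
  field_simp
  ring

lemma hasDerivAt_gg {x : ℝ} (h4 : (1:ℝ) - 4*x ≠ 0) (h64 : (1:ℝ) - 64*x ≠ 0) :
    HasDerivAt gg (gg1 x) x := by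
  have hid := hasDerivAt_id x
  have hnum := hasDerivAt_const x (6:ℝ)
  have hden := ((hid.const_mul (4:ℝ)).const_sub (1:ℝ)).mul ((hid.const_mul (64:ℝ)).const_sub (1:ℝ))
  have h := hnum.div hden (mul_ne_zero h4 h64)
  have h' : HasDerivAt gg _ x := h
  convert h' using 1
  simp only [gg1, id, Pi.mul_apply, Pi.pow_apply, Pi.add_apply, Pi.sub_apply, Pi.div_apply]
  field_simp
  ring

lemma hasDerivAt_gg1 {x : ℝ} (h4 : (1:ℝ) - 4*x ≠ 0) (h64 : (1:ℝ) - 64*x ≠ 0) :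
    HasDerivAt gg1 (gg2 x) x := by
  have hid := hasDerivAt_id x
  have hnum := (hasDerivAt_const x (408:ℝ)).sub (hid.const_mul (3072:ℝ))
  have hden := (((hid.const_mul (4:ℝ)).const_sub (1:ℝ)).mul
    ((hid.const_mul (64:ℝ)).const_sub (1:ℝ))).pow 2
  have h := hnum.div hden (pow_ne_zero 2 (mul_ne_zero h4 h64))
  have h' : HasDerivAt gg1 _ x := h
  convert h' using 1
  simp only [gg2, id, Pi.mul_apply, Pi.pow_apply, Pi.add_apply, Pi.sub_apply, Pi.div_apply]
  norm_num
  field_simp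
  ring

/-! ### Derivatives of `H` -/

noncomputable def H1 (y : ℝ) : ℝ := gg1 y * F13232 (phi y) + gg y * (F1 (phi y) * phi1 y)

noncomputable def H2 (y : ℝ) : ℝ :=
  gg2 y * F13232 (phi y) + 2 * gg1 y * F1 (phi y) * phi1 y
    + gg y * F2 (phi y) * phi1 y ^ 2 + gg y * F1 (phi y) * phi2 y

lemma hasDerivAt_H {x : ℝ} (hx : |x| < 1/100) : HasDerivAt H (H1 x) x := by
  have hphi := hasDerivAt_phi (fact4 hx)
  have hgg := hasDerivAt_gg (fact4 hx) (fact64 hx)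
  have hF := (hasDerivAt_F0 (phi_lt hx)).comp x hphi
  exact hgg.mul hF

lemma hasDerivAt_H1 {x : ℝ} (hx : |x| < 1/100) : HasDerivAt H1 (H2 x) x := by
  have hphi := hasDerivAt_phi (fact4 hx)
  have hphi1 := hasDerivAt_phi1 (fact4 hx)
  have hgg := hasDerivAt_gg (fact4 hx) (fact64 hx)
  have hgg1 := hasDerivAt_gg1 (fact4 hx) (fact64 hx)
  have hF0c := (hasDerivAt_F0 (phi_lt hx)).comp x hphi
  have hF1c := (hasDerivAt_F1 (phi_lt hx)).comp x hphi
  have h := (hgg1.mul hF0c).add (hgg.mul (hF1c.mul hphi1))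
  have hval : gg2 x * F13232 (phi x) + gg1 x * (F1 (phi x) * phi1 x)
      + (gg1 x * (F1 (phi x) * phi1 x)
        + gg x * (F2 (phi x) * phi1 x * phi1 x + F1 (phi x) * phi2 x)) = H2 x := by
    simp only [H2]
    ring
  rw [← hval]
  exact h

lemma deriv_H {y : ℝ} (hy : |y| < 1/100) : deriv H y = H1 y := (hasDerivAt_H hy).deriv

lemma deriv_deriv_H {x : ℝ} (hx : |x| < 1/100) : deriv (deriv H) x = H2 x := by
  have hnb : Metric.ball (0:ℝ) (1/100) ∈ nhds x :=
    Metric.isOpen_ball.mem_nhds (by simpa [Real.dist_eq] using hx)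
  have hev : deriv H =ᶠ[nhds x] H1 := by
    filter_upwards [hnb] with y hy
    exact deriv_H (by simpa [Real.dist_eq] using hy)
  rw [hev.deriv_eq]
  exact (hasDerivAt_H1 hx).deriv

/-- The main pointwise algebraic identity. -/
lemma key (x a b d : ℝ) (h4 : (1:ℝ) - 4*x ≠ 0) (h64 : (1:ℝ) - 64*x ≠ 0)
    (hode : phi x * (1 - phi x) * d + (2 - 2*phi x) * b - 2/9 * a = 0) :
    x*(x - 1)*(64*x - 1)*(3*x - 2)*(6*x + 1) *
      (gg2 x * a + 2 * gg1 x * b * phi1 x + gg x * d * phi1 x ^ 2 + gg x * b * phi2 x)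
    + (4608*x^4 - 6372*x^3 + 813*x^2 + 514*x - 4) * (gg1 x * a + gg x * (b * phi1 x))
    + 4*(576*x^3 - 801*x^2 - 108*x + 74) * (gg x * a) = 0 := by
  have hM : x*(x - 1)*(64*x - 1)*(3*x - 2)*(6*x + 1) *
      (gg2 x * a + 2 * gg1 x * b * phi1 x + gg x * d * phi1 x ^ 2 + gg x * b * phi2 x)
    + (4608*x^4 - 6372*x^3 + 813*x^2 + 514*x - 4) * (gg1 x * a + gg x * (b * phi1 x))
    + 4*(576*x^3 - 801*x^2 - 108*x + 74) * (gg x * a)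
      = ((-648 - 11016*x - 58320*x^2 - 69984*x^3 + 139968*x^4)/((1 - 4*x)^3*(1 - 64*x)))
        * (phi x * (1 - phi x) * d + (2 - 2*phi x) * b - 2/9 * a) := by
    simp only [phi, phi1, phi2, gg, gg1, gg2]
    have h4' : (1:ℝ) - x*4 ≠ 0 := by rwa [mul_comm]
    have h64' : (1:ℝ) - x*64 ≠ 0 := by rwa [mul_comm]
    field_simp
    ring
  rw [hM, hode, mul_zero]

end P2aux

/-- The second-order operator `P₂` annihilates `H` on a neighbourhood of `0`. -/
theorem P2_annihilates_H :
    ∃ ε > (0 : ℝ), ∀ x : ℝ, |x| < ε →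
      x*(x - 1)*(64*x - 1)*(3*x - 2)*(6*x + 1) * deriv (deriv H) x
        + (4608*x^4 - 6372*x^3 + 813*x^2 + 514*x - 4) * deriv H x
        + 4*(576*x^3 - 801*x^2 - 108*x + 74) * H x = 0 := by
  refine ⟨1/100, by norm_num, ?_⟩
  intro x hx
  rw [P2aux.deriv_deriv_H hx, P2aux.deriv_H hx]
  have hode := P2aux.ode (P2aux.phi_lt hx)
  have hkey := P2aux.key x (F13232 (P2aux.phi x)) (P2aux.F1 (P2aux.phi x))
    (P2aux.F2 (P2aux.phi x)) (P2aux.fact4 hx) (P2aux.fact64 hx) hode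
  simp only [H, P2aux.H1, P2aux.H2, P2aux.phi, P2aux.phi1, P2aux.phi2, P2aux.gg,
    P2aux.gg1, P2aux.gg2] at hkey ⊢
  linear_combination hkey
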